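/- Let μ_σ and μ_ε be nonzero positive finite Borel measures on [0,1] satisfying the thermodynamical restriction (T). Then for every s ∈ ℂ with Re s > 0: Φ_σ(s) ≠ 0, Φ_ε(s) ≠ 0, the number s²·Φ_σ(s)/Φ_ε(s) does not lie in the half-line (−∞,0] ⊂ ℝ, and consequently s² + ξ²·Φ_ε(s)/Φ_σ(s) ≠ 0 for every ξ ∈ ℝ. -/

import Mathlib

open MeasureTheory Complex Set

/-- `Phi μ s = ∫₀¹ s^α dμ(α)`, with the principal branch of the complex power. -/
noncomputable def Phi (μ : Measure ℝ) (s : ℂ) : ℂ :=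
  ∫ α in Set.Icc (0:ℝ) 1, s ^ (α : ℂ) ∂μ

/-- The thermodynamical restriction (T). -/
def TDrestriction (μσ με : Measure ℝ) : Prop :=
  ∀ E : Set (ℝ × ℝ), MeasurableSet E →
    E ⊆ {p : ℝ × ℝ | p.2 < p.1 ∧ p.1 ∈ Set.Icc (0:ℝ) 1 ∧ p.2 ∈ Set.Icc (0:ℝ) 1} →
    (μσ.prod με) E ≤ (με.prod μσ) E

section basic

variable {s : ℂ}

lemma arg_abs_lt (hs : 0 < s.re) : |s.arg| < Real.pi / 2 :=
  Complex.abs_arg_lt_pi_div_two_iff.2 (Or.inl hs)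

lemma cpow_re_eq (hs : 0 < s.re) (α : ℝ) :
    (s ^ (α : ℂ)).re = Real.exp (α * Real.log (‖s‖)) * Real.cos (α * s.arg) := by
  have hne : s ≠ 0 := by intro h; simp [h] at hs
  rw [Complex.cpow_def_of_ne_zero hne]
  rw [Complex.exp_re]
  congr 1
  · congr 1
    simp [Complex.log_re, mul_comm]
  · congr 1
    simp [Complex.log_im, mul_comm]

lemma cpow_im_eq (hs : 0 < s.re) (α : ℝ) :
    (s ^ (α : ℂ)).im = Real.exp (α * Real.log (‖s‖)) * Real.sin (α * s.arg) := by
  have hne : s ≠ 0 := by intro h; simp [h] at hs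
  rw [Complex.cpow_def_of_ne_zero hne]
  rw [Complex.exp_im]
  congr 1
  · congr 1
    simp [Complex.log_re, mul_comm]
  · congr 1
    simp [Complex.log_im, mul_comm]

lemma cos_pos_of_mem (hs : 0 < s.re) {α : ℝ} (hα : α ∈ Set.Icc (0:ℝ) 1) :
    0 < Real.cos (α * s.arg) := by
  have h := arg_abs_lt hs
  have h1 : |α * s.arg| < Real.pi / 2 := by
    rw [abs_mul]
    calc |α| * |s.arg| ≤ 1 * |s.arg| := by
          apply mul_le_mul_of_nonneg_right _ (abs_nonneg _)
          rw [abs_le]; constructor <;> [linarith [hα.1]; exact hα.2]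
      _ = |s.arg| := one_mul _
      _ < Real.pi / 2 := h
  exact Real.cos_pos_of_mem_Ioo ⟨by rw [abs_lt] at h1; linarith [h1.1], (abs_lt.1 h1).2⟩

lemma cont_cpow (hs : 0 < s.re) : Continuous fun α : ℝ => s ^ (α : ℂ) := by
  have hne : s ≠ 0 := by intro h; simp [h] at hs
  exact Complex.continuous_ofReal.const_cpow (Or.inl hne)

lemma integrableOn_cpow (hs : 0 < s.re) (μ : Measure ℝ) [IsFiniteMeasure μ] :
    IntegrableOn (fun α : ℝ => s ^ (α : ℂ)) (Set.Icc (0:ℝ) 1) μ :=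
  ((cont_cpow hs).locallyIntegrable (μ := μ)).integrableOn_isCompact isCompact_Icc

end basic

section parts

variable {s : ℂ}

lemma Phi_re_eq (hs : 0 < s.re) (μ : Measure ℝ) [IsFiniteMeasure μ] :
    (Phi μ s).re = ∫ α in Set.Icc (0:ℝ) 1, (s ^ (α:ℂ)).re ∂μ := by
  simpa [Phi] using (integral_re (integrableOn_cpow hs μ)).symm

lemma Phi_im_eq (hs : 0 < s.re) (μ : Measure ℝ) [IsFiniteMeasure μ] :
    (Phi μ s).im = ∫ α in Set.Icc (0:ℝ) 1, (s ^ (α:ℂ)).im ∂μ := by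
  simpa [Phi] using (integral_im (integrableOn_cpow hs μ)).symm

lemma Phi_re_pos (hs : 0 < s.re) (μ : Measure ℝ) [IsFiniteMeasure μ]
    (hμ : μ ≠ 0) (hsupp : μ (Set.Icc (0:ℝ) 1)ᶜ = 0) : 0 < (Phi μ s).re := by
  rw [Phi_re_eq hs]
  have hI : 0 < μ (Set.Icc (0:ℝ) 1) := by
    have h1 : 0 < μ Set.univ := Measure.measure_univ_pos.2 hμ
    have h2 : μ Set.univ ≤ μ (Set.Icc (0:ℝ) 1) + μ (Set.Icc (0:ℝ) 1)ᶜ := by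
      rw [← Set.union_compl_self (Set.Icc (0:ℝ) 1)]
      exact measure_union_le _ _
    rw [hsupp, add_zero] at h2
    exact h1.trans_le h2
  have hint := (integrableOn_cpow hs μ).re
  rw [setIntegral_pos_iff_support_of_nonneg_ae]
  · refine hI.trans_le (measure_mono fun α hα => ⟨?_, hα⟩)
    have := mul_pos (Real.exp_pos (α * Real.log (‖s‖))) (cos_pos_of_mem hs hα)
    rw [← cpow_re_eq hs] at this
    exact fun h => by simp [Function.mem_support] at h; simp [h] at this
  · refine (ae_restrict_iff' measurableSet_Icc).2 (.of_forall fun α hα => ?_)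
    have := mul_pos (Real.exp_pos (α * Real.log (‖s‖))) (cos_pos_of_mem hs hα)
    rw [← cpow_re_eq hs] at this
    exact this.le
  · exact hint

lemma Phi_im_nonneg (hs : 0 < s.re) (him : 0 ≤ s.im) (μ : Measure ℝ) [IsFiniteMeasure μ] :
    0 ≤ (Phi μ s).im := by
  rw [Phi_im_eq hs]
  refine setIntegral_nonneg measurableSet_Icc fun α hα => ?_
  rw [cpow_im_eq hs]
  have harg : 0 ≤ s.arg := Complex.arg_nonneg_iff.2 him
  have h2 := arg_abs_lt hs
  have hπ : Real.pi / 2 ≤ Real.pi := by linarith [Real.pi_pos]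
  refine mul_nonneg (Real.exp_pos _).le (Real.sin_nonneg_of_nonneg_of_le_pi
    (mul_nonneg hα.1 harg) ?_)
  calc α * s.arg ≤ 1 * s.arg := by apply mul_le_mul_of_nonneg_right hα.2 harg
    _ = s.arg := one_mul _
    _ ≤ Real.pi := by rw [abs_lt] at h2; linarith [h2.2]

end parts

section key

variable {s : ℂ}

/-- Pointwise nonnegativity of the antisymmetric kernel on the triangle. -/
lemma F_nonneg (hs : 0 < s.re) (him : 0 ≤ s.im) {α β : ℝ}
    (hα : α ∈ Set.Icc (0:ℝ) 1) (hβ : β ∈ Set.Icc (0:ℝ) 1) (hlt : β < α) :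
    0 ≤ (s ^ (α:ℂ)).im * (s ^ (β:ℂ)).re - (s ^ (α:ℂ)).re * (s ^ (β:ℂ)).im := by
  rw [cpow_im_eq hs, cpow_re_eq hs, cpow_re_eq hs, cpow_im_eq hs]
  have key : Real.exp (α * Real.log (‖s‖)) * Real.sin (α * s.arg) *
      (Real.exp (β * Real.log (‖s‖)) * Real.cos (β * s.arg)) -
      Real.exp (α * Real.log (‖s‖)) * Real.cos (α * s.arg) *
      (Real.exp (β * Real.log (‖s‖)) * Real.sin (β * s.arg)) =
      Real.exp (α * Real.log (‖s‖)) * Real.exp (β * Real.log (‖s‖)) *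
      Real.sin ((α - β) * s.arg) := by
    rw [sub_mul, Real.sin_sub]
    ring
  rw [key]
  have harg : 0 ≤ s.arg := Complex.arg_nonneg_iff.2 him
  have h2 := arg_abs_lt hs
  refine mul_nonneg (mul_nonneg (Real.exp_pos _).le (Real.exp_pos _).le)
    (Real.sin_nonneg_of_nonneg_of_le_pi (mul_nonneg (by linarith) harg) ?_)
  have hab : α - β ≤ 1 := by linarith [hα.2, hβ.1]
  calc (α - β) * s.arg ≤ 1 * s.arg := mul_le_mul_of_nonneg_right hab harg
    _ = s.arg := one_mul _
    _ ≤ Real.pi := by rw [abs_lt] at h2; linarith [h2.2, Real.pi_pos]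

lemma K_nonneg (μσ με : Measure ℝ) [IsFiniteMeasure μσ] [IsFiniteMeasure με]
    (hT : ∀ E : Set (ℝ × ℝ), MeasurableSet E →
      E ⊆ {p : ℝ × ℝ | p.2 < p.1 ∧ p.1 ∈ Set.Icc (0:ℝ) 1 ∧ p.2 ∈ Set.Icc (0:ℝ) 1} →
      (μσ.prod με) E ≤ (με.prod μσ) E)
    (hs : 0 < s.re) (him : 0 ≤ s.im) :
    0 ≤ (Phi με s).im * (Phi μσ s).re - (Phi με s).re * (Phi μσ s).im := by
  set I : Set ℝ := Set.Icc (0:ℝ) 1 with hIdef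
  set f : ℝ → ℝ := fun α => (s ^ (α:ℂ)).re with hfdef
  set g : ℝ → ℝ := fun α => (s ^ (α:ℂ)).im with hgdef
  set F : ℝ × ℝ → ℝ := fun p => g p.1 * f p.2 - f p.1 * g p.2 with hFdef
  have hIm : MeasurableSet I := measurableSet_Icc
  set π1 : Measure (ℝ × ℝ) := (με.restrict I).prod (μσ.restrict I) with hπ1
  set π2 : Measure (ℝ × ℝ) := (μσ.restrict I).prod (με.restrict I) with hπ2
  have hfc : Continuous f := Complex.continuous_re.comp (cont_cpow hs)
  have hgc : Continuous g := Complex.continuous_im.comp (cont_cpow hs)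
  have hFc : Continuous F :=
    ((hgc.comp continuous_fst).mul (hfc.comp continuous_snd)).sub
      ((hfc.comp continuous_fst).mul (hgc.comp continuous_snd))
  -- integrability
  have hfε : Integrable f (με.restrict I) := (integrableOn_cpow hs με).re
  have hgε : Integrable g (με.restrict I) := (integrableOn_cpow hs με).im
  have hfσ : Integrable f (μσ.restrict I) := (integrableOn_cpow hs μσ).re
  have hgσ : Integrable g (μσ.restrict I) := (integrableOn_cpow hs μσ).im
  have hFi1 : Integrable F π1 :=
    (hgε.mul_prod hfσ).sub (hfε.mul_prod hgσ)
  have hFi2 : Integrable F π2 :=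
    (hgσ.mul_prod hfε).sub (hfσ.mul_prod hgε)
  -- step A : K = ∫ F ∂π1
  have hstepA : (Phi με s).im * (Phi μσ s).re - (Phi με s).re * (Phi μσ s).im
      = ∫ p, F p ∂π1 := by
    rw [integral_sub (hgε.mul_prod hfσ) (hfε.mul_prod hgσ),
      integral_prod_mul, integral_prod_mul,
      Phi_im_eq hs με, Phi_re_eq hs μσ, Phi_re_eq hs με, Phi_im_eq hs μσ]
  -- step B : symmetrization
  set S : Set (ℝ × ℝ) := {p | p.2 < p.1} with hSdef
  set T : Set (ℝ × ℝ) := {p | p.1 < p.2} with hTdef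
  set D : Set (ℝ × ℝ) := {p | p.1 = p.2} with hDdef
  have hS : MeasurableSet S := measurableSet_lt measurable_snd measurable_fst
  have hTm : MeasurableSet T := measurableSet_lt measurable_fst measurable_snd
  have hD : MeasurableSet D := measurableSet_eq_fun measurable_fst measurable_snd
  have hSc : Sᶜ = T ∪ D := by
    ext p
    simp only [hSdef, hTdef, hDdef, Set.mem_compl_iff, Set.mem_setOf_eq, Set.mem_union,
      not_lt]
    constructor
    · intro h; rcases lt_or_eq_of_le h with h | h
      · exact Or.inl h
      · exact Or.inr h
    · intro h; rcases h with h | h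
      · exact h.le
      · exact h.le
  have hDzero : ∫ p in D, F p ∂π1 = 0 := by
    have : EqOn F (fun _ => (0:ℝ)) D := fun p hp => by
      simp only [hFdef]
      have : p.1 = p.2 := hp
      rw [this]; ring
    rw [setIntegral_congr_fun hD this]
    simp
  have hswap : ∫ p in S, F p ∂π2 = - ∫ p in T, F p ∂π1 := by
    have hm : π2 = Measure.map Prod.swap π1 := (Measure.prod_swap).symm
    rw [hm, setIntegral_map hS (hFc.aestronglyMeasurable) measurable_swap.aemeasurable]
    have hpre : Prod.swap ⁻¹' S = T := by
      ext p; simp [hSdef, hTdef, Prod.swap]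
    rw [hpre]
    have : ∀ p : ℝ × ℝ, F (Prod.swap p) = - F p := fun p => by
      simp only [hFdef, Prod.swap]; ring
    simp_rw [this]
    rw [integral_neg]
  have hKsplit : ∫ p, F p ∂π1 = (∫ p in S, F p ∂π1) - ∫ p in S, F p ∂π2 := by
    have h1 : ∫ p in S, F p ∂π1 + ∫ p in Sᶜ, F p ∂π1 = ∫ p, F p ∂π1 :=
      integral_add_compl hS hFi1
    have h2 : ∫ p in Sᶜ, F p ∂π1 = ∫ p in T, F p ∂π1 := by
      rw [hSc, setIntegral_union (by
        rw [Set.disjoint_left]; intro p hp1 hp2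
        have h1 : p.1 < p.2 := hp1
        have h2 : p.1 = p.2 := hp2
        exact absurd h2 (ne_of_lt h1)) hD
        hFi1.integrableOn hFi1.integrableOn, hDzero, add_zero]
    rw [hswap]
    linarith [h1, h2]
  -- step C : comparison of the two integrals over S
  have hres1 : π1.restrict S = ((με.prod μσ).restrict (I ×ˢ I)).restrict S := by
    rw [hπ1, Measure.prod_restrict]
  have hres2 : π2.restrict S = ((μσ.prod με).restrict (I ×ˢ I)).restrict S := by
    rw [hπ2, Measure.prod_restrict]
  have hIIm : MeasurableSet (I ×ˢ I) := hIm.prod hIm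
  have hle : π2.restrict S ≤ π1.restrict S := by
    rw [Measure.le_iff]
    intro E hE
    rw [Measure.restrict_apply hE, Measure.restrict_apply hE, hπ1, hπ2,
      Measure.prod_restrict, Measure.prod_restrict,
      Measure.restrict_apply (hE.inter hS), Measure.restrict_apply (hE.inter hS)]
    refine hT _ (((hE.inter hS).inter hIIm)) ?_
    intro p hp
    exact ⟨hp.1.2, hp.2.1, hp.2.2⟩
  -- a.e. nonnegativity on S for both restricted measures
  have hae1 : 0 ≤ᵐ[π1.restrict S] F := by
    rw [hres1, Measure.restrict_restrict hS]
    filter_upwards [ae_restrict_mem (hS.inter hIIm)] with p hp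
    exact F_nonneg hs him hp.2.1 hp.2.2 hp.1
  have hae2 : 0 ≤ᵐ[π2.restrict S] F := by
    rw [hres2, Measure.restrict_restrict hS]
    filter_upwards [ae_restrict_mem (hS.inter hIIm)] with p hp
    exact F_nonneg hs him hp.2.1 hp.2.2 hp.1
  have hcmp : ∫ p in S, F p ∂π2 ≤ ∫ p in S, F p ∂π1 := by
    rw [integral_eq_lintegral_of_nonneg_ae hae2 hFc.aestronglyMeasurable,
      integral_eq_lintegral_of_nonneg_ae hae1 hFc.aestronglyMeasurable]
    apply ENNReal.toReal_mono
    · exact (Integrable.lintegral_lt_top hFi1.integrableOn).ne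
    · exact lintegral_mono' hle (le_refl _)
  rw [hstepA, hKsplit]
  linarith

lemma real_key (P Q Ar Ai : ℝ) (hP : 0 < P) (hQ : 0 ≤ Q)
    (hAr : 0 < Ar) (hAi : Ai ≤ 0)
    (him : (P ^ 2 - Q ^ 2) * Ai + 2 * P * Q * Ar = 0)
    (hre : (P ^ 2 - Q ^ 2) * Ar - 2 * P * Q * Ai ≤ 0) :
    False := by
  rcases hQ.lt_or_eq with hQ' | hQ'
  · -- 0 < Q
    have hPQ : 0 < 2 * P * Q * Ar := by positivity
    have h1 : (P ^ 2 - Q ^ 2) * Ai < 0 := by linarith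
    have h2 : 0 < P ^ 2 - Q ^ 2 := by
      rcases lt_trichotomy (P ^ 2 - Q ^ 2) 0 with h | h | h
      · nlinarith
      · nlinarith
      · exact h
    have h3 : 0 ≤ 2 * P * Q * (-Ai) := mul_nonneg (by positivity) (by linarith)
    nlinarith [mul_pos h2 hAr]
  · -- Q = 0
    rw [← hQ'] at hre
    have : 0 < P ^ 2 * Ar := by positivity
    nlinarith

lemma alg_key (s a b : ℂ) (hsre : 0 < s.re) (hsim : 0 ≤ s.im)
    (har : 0 < a.re) (hbr : 0 < b.re) (hai : 0 ≤ a.im) (hbi : 0 ≤ b.im)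
    (hK : 0 ≤ b.im * a.re - b.re * a.im) :
    (s ^ 2 * a / b) ∉ {z : ℂ | z.im = 0 ∧ z.re ≤ 0} := by
  rintro ⟨h1, h2⟩
  have hb0 : b ≠ 0 := fun h => by simp [h] at hbr
  have key : s ^ 2 * a * (starRingEnd ℂ) b = (s ^ 2 * a / b) * (b * (starRingEnd ℂ) b) := by
    field_simp
  have e_im : (s ^ 2 * a * (starRingEnd ℂ) b).im =
      (s.re ^ 2 - s.im ^ 2) * (a.im * b.re - a.re * b.im) +
        2 * s.re * s.im * (a.re * b.re + a.im * b.im) := by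
    simp [pow_two, Complex.mul_re, Complex.mul_im]
    ring
  have e_re : (s ^ 2 * a * (starRingEnd ℂ) b).re =
      (s.re ^ 2 - s.im ^ 2) * (a.re * b.re + a.im * b.im) -
        2 * s.re * s.im * (a.im * b.re - a.re * b.im) := by
    simp [pow_two, Complex.mul_re, Complex.mul_im]
    ring
  have him0 : (s ^ 2 * a * (starRingEnd ℂ) b).im = 0 := by
    rw [key, Complex.mul_conj]
    simp [Complex.mul_im, h1]
  have hre0 : (s ^ 2 * a * (starRingEnd ℂ) b).re ≤ 0 := by
    rw [key, Complex.mul_conj]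
    simp only [Complex.mul_re, Complex.ofReal_re, Complex.ofReal_im, mul_zero, sub_zero]
    exact mul_nonpos_of_nonpos_of_nonneg h2 (Complex.normSq_nonneg b)
  rw [e_im] at him0
  rw [e_re] at hre0
  exact real_key s.re s.im (a.re * b.re + a.im * b.im) (a.im * b.re - a.re * b.im)
    hsre hsim (by nlinarith) (by nlinarith) him0 hre0

lemma cpow_conj' (hs : 0 < s.re) (α : ℝ) :
    ((starRingEnd ℂ) s) ^ (α : ℂ) = (starRingEnd ℂ) (s ^ (α : ℂ)) := by
  have hne : s ≠ 0 := fun h => by simp [h] at hs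
  have hne' : (starRingEnd ℂ) s ≠ 0 := by
    simpa using hne
  have harg : s.arg ≠ Real.pi := by
    have := arg_abs_lt hs
    intro h
    rw [h, _root_.abs_of_nonneg Real.pi_pos.le] at this
    linarith [Real.pi_pos]
  rw [Complex.cpow_def_of_ne_zero hne, Complex.cpow_def_of_ne_zero hne',
    ← Complex.exp_conj, Complex.log_conj _ harg, map_mul, Complex.conj_ofReal]

lemma Phi_conj (hs : 0 < s.re) (μ : Measure ℝ) [IsFiniteMeasure μ] :
    Phi μ ((starRingEnd ℂ) s) = (starRingEnd ℂ) (Phi μ s) := by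
  rw [Phi, Phi, ← integral_conj]
  exact integral_congr_ae (.of_forall fun α => cpow_conj' hs α)

end key

lemma main3_nonneg (μσ με : Measure ℝ) [IsFiniteMeasure μσ] [IsFiniteMeasure με]
    (hσ : μσ ≠ 0) (hε : με ≠ 0)
    (hσsupp : μσ (Set.Icc (0:ℝ) 1)ᶜ = 0) (hεsupp : με (Set.Icc (0:ℝ) 1)ᶜ = 0)
    (hT : TDrestriction μσ με) (s : ℂ) (hs : 0 < s.re) (him : 0 ≤ s.im) :
    Phi μσ s ≠ 0 ∧ Phi με s ≠ 0
      ∧ (s ^ 2 * Phi μσ s / Phi με s) ∉ {z : ℂ | z.im = 0 ∧ z.re ≤ 0} := by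
  have hσre : 0 < (Phi μσ s).re := Phi_re_pos hs μσ hσ hσsupp
  have hεre : 0 < (Phi με s).re := Phi_re_pos hs με hε hεsupp
  refine ⟨fun h => by rw [h] at hσre; simp at hσre,
    fun h => by rw [h] at hεre; simp at hεre, ?_⟩
  exact alg_key s (Phi μσ s) (Phi με s) hs him hσre hεre
    (Phi_im_nonneg hs him μσ) (Phi_im_nonneg hs him με) (K_nonneg μσ με hT hs him)

lemma main3 (μσ με : Measure ℝ) [IsFiniteMeasure μσ] [IsFiniteMeasure με]
    (hσ : μσ ≠ 0) (hε : με ≠ 0)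
    (hσsupp : μσ (Set.Icc (0:ℝ) 1)ᶜ = 0) (hεsupp : με (Set.Icc (0:ℝ) 1)ᶜ = 0)
    (hT : TDrestriction μσ με) (s : ℂ) (hs : 0 < s.re) :
    Phi μσ s ≠ 0 ∧ Phi με s ≠ 0
      ∧ (s ^ 2 * Phi μσ s / Phi με s) ∉ {z : ℂ | z.im = 0 ∧ z.re ≤ 0} := by
  by_cases him : 0 ≤ s.im
  · exact main3_nonneg μσ με hσ hε hσsupp hεsupp hT s hs him
  · push_neg at him
    set t : ℂ := (starRingEnd ℂ) s with htdef
    have htre : 0 < t.re := by simpa [htdef] using hs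
    have htim : 0 ≤ t.im := by simp [htdef]; linarith
    obtain ⟨h1, h2, h3⟩ := main3_nonneg μσ με hσ hε hσsupp hεsupp hT t htre htim
    have hst : s = (starRingEnd ℂ) t := by simp [htdef]
    have e1 : Phi μσ s = (starRingEnd ℂ) (Phi μσ t) := by
      rw [hst, Phi_conj htre]
    have e2 : Phi με s = (starRingEnd ℂ) (Phi με t) := by
      rw [hst, Phi_conj htre]
    refine ⟨?_, ?_, ?_⟩
    · rw [e1]; intro h; apply h1
      rwa [starRingEnd_apply, star_eq_zero] at h
    · rw [e2]; intro h; apply h2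
      rwa [starRingEnd_apply, star_eq_zero] at h
    · have e3 : s ^ 2 * Phi μσ s / Phi με s =
          (starRingEnd ℂ) (t ^ 2 * Phi μσ t / Phi με t) := by
        rw [e1, e2, show s ^ 2 = (starRingEnd ℂ) (t ^ 2) by rw [hst, map_pow],
          ← map_mul, ← map_div₀]
      rw [e3]
      rintro ⟨ha, hb⟩
      apply h3
      refine ⟨?_, ?_⟩
      · have : -(t ^ 2 * Phi μσ t / Phi με t).im = 0 := by
          rw [← Complex.conj_im]; exact ha
        linarith [this]
      · have : (t ^ 2 * Phi μσ t / Phi με t).re ≤ 0 := by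
          rw [← Complex.conj_re]; exact hb
        exact this

theorem stmt_6 (μσ με : Measure ℝ) [IsFiniteMeasure μσ] [IsFiniteMeasure με]
    (hσ : μσ ≠ 0) (hε : με ≠ 0)
    (hσsupp : μσ (Set.Icc (0:ℝ) 1)ᶜ = 0) (hεsupp : με (Set.Icc (0:ℝ) 1)ᶜ = 0)
    (hT : TDrestriction μσ με) :
    ∀ s : ℂ, 0 < s.re →
      Phi μσ s ≠ 0
      ∧ Phi με s ≠ 0
      ∧ (s ^ 2 * Phi μσ s / Phi με s) ∉ {z : ℂ | z.im = 0 ∧ z.re ≤ 0}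
      ∧ ∀ ξ : ℝ, s ^ 2 + (ξ : ℂ) ^ 2 * Phi με s / Phi μσ s ≠ 0 := by
  intro s hs
  obtain ⟨h1, h2, h3⟩ := main3 μσ με hσ hε hσsupp hεsupp hT s hs
  refine ⟨h1, h2, h3, ?_⟩
  intro ξ hcontra
  apply h3
  have key : s ^ 2 * Phi μσ s / Phi με s = ((-(ξ ^ 2) : ℝ) : ℂ) := by
    have h' : s ^ 2 * Phi μσ s + (ξ : ℂ) ^ 2 * Phi με s = 0 := by
      field_simp at hcontra
      linear_combination hcontra
    push_cast
    field_simp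
    linear_combination h'
  rw [key]
  exact ⟨Complex.ofReal_im _, by rw [Complex.ofReal_re]; exact neg_nonpos.2 (sq_nonneg ξ)⟩
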